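/- Let a be an even positive integer and b an odd positive integer, let λ = (1+a, 1^b) be the hook partition with arm length a and leg length b, and define α = (1 + a/2, 1^{(b−1)/2}) and β = (a/2, 1^{(b+1)/2}). Then the Littlewood–Richardson coefficient c^λ_{βα} (counting Littlewood–Richardson tableaux of shape λ/β and content α) is at least 1. -/

import Mathlib

/-- A partition: a weakly decreasing finite sequence (list) of positive
integers. -/
def IsPartition (l : List ℕ) : Prop :=
  l.Pairwise (· ≥ ·) ∧ ∀ x ∈ l, 0 < x

/-- The `i`-th part (0-indexed) of a partition, `0` beyond its length. -/
def part (l : List ℕ) (i : ℕ) : ℕ := l.getD i 0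

/-- Cell `(i, j)` (row `i`, column `j`, both 0-indexed) lies in the skew
Young diagram `ν/λ`. -/
def InSkew (nu lam : List ℕ) (i j : ℕ) : Prop :=
  part lam i ≤ j ∧ j < part nu i

/-- Cell `(i, j)` comes weakly before cell `(r, c)` in the reverse reading
order: rows are read top to bottom, and each row is read right to left. -/
def ReadingLE (i j r c : ℕ) : Prop := i < r ∨ (i = r ∧ c ≤ j)

/-- `T` is a Littlewood–Richardson tableau of shape `ν/λ` and content `μ`:
`λ ⊆ ν`, the entries of `T` are positive exactly on the cells of the skew
diagram `ν/λ`, entries weakly increase from left to right along rows,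
entries strictly increase from top to bottom down columns, for every `j ≥ 1`
the entry `j` occurs exactly `μ_j` times, and the reverse reading word is a
lattice word: every prefix contains at least as many occurrences of `j` as
of `j + 1`, for every `j ≥ 1`. -/
structure IsLRTableau (nu lam mu : List ℕ) (T : ℕ → ℕ → ℕ) : Prop where
  subset : ∀ i, part lam i ≤ part nu i
  support : ∀ i j, 0 < T i j ↔ InSkew nu lam i j
  row_weak : ∀ i j j', InSkew nu lam i j → InSkew nu lam i j' → j ≤ j' →
    T i j ≤ T i j'
  col_strict : ∀ i i' j, InSkew nu lam i j → InSkew nu lam i' j → i < i' →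
    T i j < T i' j
  content : ∀ k : ℕ, {p : ℕ × ℕ | T p.1 p.2 = k + 1}.ncard = part mu k
  lattice : ∀ r c k : ℕ,
    {p : ℕ × ℕ | T p.1 p.2 = k + 2 ∧ ReadingLE p.1 p.2 r c}.ncard ≤
    {p : ℕ × ℕ | T p.1 p.2 = k + 1 ∧ ReadingLE p.1 p.2 r c}.ncard

/-- The Littlewood–Richardson coefficient `c^ν_{λμ}`: the number of
Littlewood–Richardson tableaux of shape `ν/λ` and content `μ`. -/
noncomputable def lrCoeff (nu lam mu : List ℕ) : ℕ :=
  {T : ℕ → ℕ → ℕ | IsLRTableau nu lam mu T}.ncard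

/-- The Newell–Littlewood coefficient
`N^ν_{λμ} = Σ_{α,β,γ} c^λ_{αβ} · c^μ_{αγ} · c^ν_{βγ}`, the sum running over
all triples of partitions `(α, β, γ)` (only finitely many terms are
nonzero). -/
noncomputable def nlCoeff (lam mu nu : List ℕ) : ℕ :=
  ∑ᶠ x : {l : List ℕ // IsPartition l} × {l : List ℕ // IsPartition l} ×
      {l : List ℕ // IsPartition l},
    lrCoeff lam x.1.val x.2.1.val * lrCoeff mu x.1.val x.2.2.val *
      lrCoeff nu x.2.1.val x.2.2.val

/-- The hook partition `(1 + a, 1^b)` with arm length `a` and leg length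
`b`. -/
def hook (a b : ℕ) : List ℕ := (1 + a) :: List.replicate b 1

def T0 (m t : ℕ) : ℕ → ℕ → ℕ := fun i j =>
  if i = 0 ∧ m ≤ j ∧ j ≤ 2*m then 1
  else if t+1 < i ∧ i ≤ 2*t+1 ∧ j = 0 then i - t
  else 0

lemma part_cons_replicate (x c n i : ℕ) :
    part (x :: List.replicate n c) i = if i = 0 then x else if i ≤ n then c else 0 := by
  cases i with
  | zero => rfl
  | succ i =>
    show (List.replicate n c).getD i 0 = _
    by_cases h : i < n
    · rw [List.getD_eq_getElem _ _ (by simpa using h), List.getElem_replicate,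
        if_neg (Nat.succ_ne_zero i), if_pos (by omega)]
    · rw [List.getD_eq_default _ _ (by simpa using h),
        if_neg (Nat.succ_ne_zero i), if_neg (by omega)]

lemma inSkew_iff (m t : ℕ) (hm : 0 < m) (i j : ℕ) :
    InSkew ((1+2*m) :: List.replicate (2*t+1) 1) (m :: List.replicate (t+1) 1) i j ↔
    (i = 0 ∧ m ≤ j ∧ j ≤ 2*m) ∨ (t+1 < i ∧ i ≤ 2*t+1 ∧ j = 0) := by
  unfold InSkew
  rw [part_cons_replicate, part_cons_replicate]
  split_ifs <;> first | omega | (rw [false_iff]; omega) | (rw [iff_false]; omega) | (rw [true_iff]; omega) | (rw [iff_true]; omega)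

lemma T0_eq_iff (m t i j k : ℕ) :
    T0 m t i j = k + 1 ↔
    (k = 0 ∧ i = 0 ∧ m ≤ j ∧ j ≤ 2*m) ∨ (1 ≤ k ∧ k ≤ t ∧ i = t+1+k ∧ j = 0) := by
  unfold T0
  split_ifs <;> first | omega | (rw [false_iff]; omega) | (rw [iff_false]; omega) | (rw [true_iff]; omega) | (rw [iff_true]; omega)

lemma T0_level_eq (m t k : ℕ) :
    {p : ℕ × ℕ | T0 m t p.1 p.2 = k + 1} =
    if k = 0 then Prod.mk 0 '' Set.Icc m (2*m)
    else if k ≤ t then {(t+1+k, 0)} else ∅ := by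
  ext ⟨i, j⟩
  simp only [Set.mem_setOf_eq, T0_eq_iff]
  split_ifs with h1 h2
  · subst h1
    simp only [Set.mem_image, Set.mem_Icc, Prod.mk.injEq]
    constructor
    · rintro (⟨-, rfl, h, h'⟩ | ⟨h, -⟩)
      · exact ⟨j, ⟨h, h'⟩, by simp⟩
      · omega
    · rintro ⟨x, hx, h1, h2⟩
      exact Or.inl ⟨trivial, by omega, by omega⟩
  · simp only [Set.mem_singleton_iff, Prod.mk.injEq]
    omega
  · simp only [Set.mem_empty_iff_false, iff_false]
    omega

lemma T0_level_finite (m t k : ℕ) :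
    {p : ℕ × ℕ | T0 m t p.1 p.2 = k + 1}.Finite := by
  rw [T0_level_eq]
  split_ifs
  · exact (Set.finite_Icc _ _).image _
  · exact Set.finite_singleton _
  · exact Set.finite_empty

lemma T0_isLR (m t : ℕ) (hm : 0 < m) :
    IsLRTableau ((1+2*m) :: List.replicate (2*t+1) 1)
      (m :: List.replicate (t+1) 1) ((1+m) :: List.replicate t 1) (T0 m t) := by
  constructor
  · intro i
    rw [part_cons_replicate, part_cons_replicate]
    split_ifs <;> first | omega | (rw [false_iff]; omega) | (rw [iff_false]; omega) | (rw [true_iff]; omega) | (rw [iff_true]; omega)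
  · intro i j
    rw [inSkew_iff m t hm]
    unfold T0
    split_ifs <;> first | omega | (rw [false_iff]; omega) | (rw [iff_false]; omega) | (rw [true_iff]; omega) | (rw [iff_true]; omega)
  · intro i j j' h1 h2 h3
    rw [inSkew_iff m t hm] at h1 h2
    unfold T0
    split_ifs <;> first | omega | (rw [false_iff]; omega) | (rw [iff_false]; omega) | (rw [true_iff]; omega) | (rw [iff_true]; omega)
  · intro i i' j h1 h2 h3
    rw [inSkew_iff m t hm] at h1 h2
    unfold T0
    split_ifs <;> first | omega | (rw [false_iff]; omega) | (rw [iff_false]; omega) | (rw [true_iff]; omega) | (rw [iff_true]; omega)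
  · intro k
    rw [T0_level_eq, part_cons_replicate]
    split_ifs with h1 h2
    · have hinj : Function.Injective (Prod.mk (0 : ℕ) : ℕ → ℕ × ℕ) := by
        intro x y hxy
        simpa using hxy
      rw [Set.ncard_image_of_injective _ hinj, ← Finset.coe_Icc,
        Set.ncard_coe_finset, Nat.card_Icc]
      omega
    · simp
    · simp
  · intro r c k
    rcases Set.eq_empty_or_nonempty
      {p : ℕ × ℕ | T0 m t p.1 p.2 = k + 2 ∧ ReadingLE p.1 p.2 r c} with hA | hA
    · simp [hA]
    · obtain ⟨⟨i, j⟩, hij, hR⟩ := hA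
      rw [show k + 2 = (k+1) + 1 from rfl, T0_eq_iff] at hij
      have hij' : i = t + 2 + k ∧ j = 0 ∧ k + 1 ≤ t := by omega
      obtain ⟨rfl, rfl, hkt⟩ := hij'
      have hr : t + 2 + k ≤ r := by
        rcases hR with h | ⟨h, h'⟩ <;> omega
      have hAsub : {p : ℕ × ℕ | T0 m t p.1 p.2 = k + 2 ∧ ReadingLE p.1 p.2 r c} ⊆
          {((t+2+k : ℕ), (0 : ℕ))} := by
        rintro ⟨i', j'⟩ ⟨hv, -⟩
        rw [show k + 2 = (k+1) + 1 from rfl, T0_eq_iff] at hv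
        simp only [Set.mem_singleton_iff, Prod.mk.injEq]
        omega
      have hB : {p : ℕ × ℕ | T0 m t p.1 p.2 = k + 1 ∧ ReadingLE p.1 p.2 r c}.Nonempty := by
        rcases Nat.eq_zero_or_pos k with rfl | hk
        · refine ⟨(0, 2*m), ?_, Or.inl (by omega)⟩
          show T0 m t 0 (2*m) = 0 + 1
          rw [T0_eq_iff]
          omega
        · refine ⟨(t+1+k, 0), ?_, Or.inl (by omega)⟩
          show T0 m t (t+1+k) 0 = k + 1
          rw [T0_eq_iff]
          omega
      have hBfin : {p : ℕ × ℕ | T0 m t p.1 p.2 = k + 1 ∧ ReadingLE p.1 p.2 r c}.Finite :=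
        (T0_level_finite m t k).subset (fun p hp => hp.1)
      calc {p : ℕ × ℕ | T0 m t p.1 p.2 = k + 2 ∧ ReadingLE p.1 p.2 r c}.ncard
          ≤ ({((t+2+k : ℕ), (0 : ℕ))} : Set (ℕ × ℕ)).ncard :=
            Set.ncard_le_ncard hAsub (Set.finite_singleton _)
        _ = 1 := Set.ncard_singleton _
        _ ≤ _ := (Set.ncard_pos hBfin).mpr hB

lemma LRset_finite (m t : ℕ) (hm : 0 < m) :
    {T : ℕ → ℕ → ℕ | IsLRTableau ((1+2*m) :: List.replicate (2*t+1) 1)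
      (m :: List.replicate (t+1) 1) ((1+m) :: List.replicate t 1) T}.Finite := by
  set S := {T : ℕ → ℕ → ℕ | IsLRTableau ((1+2*m) :: List.replicate (2*t+1) 1)
      (m :: List.replicate (t+1) 1) ((1+m) :: List.replicate t 1) T} with hS
  -- bound on values
  have hbound : ∀ T ∈ S, ∀ i j, T i j ≤ t + 1 := by
    intro T hT i j
    by_contra h
    push_neg at h
    set k := T i j - 1 with hk
    have hTij : T i j = k + 1 := by omega
    have hkt : t < k := by omega
    have hfin : {p : ℕ × ℕ | T p.1 p.2 = k + 1}.Finite := by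
      apply Set.Finite.subset (Set.finite_Icc ((0:ℕ),(0:ℕ)) ((2*t+1, 2*m)))
      rintro ⟨i', j'⟩ hp
      have h0 : 0 < T i' j' := by rw [hp]; omega
      have := (hT.support i' j').mp h0
      rw [inSkew_iff m t hm] at this
      simp only [Set.mem_Icc, Prod.mk_le_mk]
      omega
    have hcard := hT.content k
    rw [part_cons_replicate] at hcard
    have h0 : {p : ℕ × ℕ | T p.1 p.2 = k + 1}.ncard = 0 := by
      rw [hcard]
      split_ifs <;> first | omega | (rw [false_iff]; omega) | (rw [iff_false]; omega) | (rw [true_iff]; omega) | (rw [iff_true]; omega)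
    have hemp := (Set.ncard_eq_zero hfin).mp h0
    exact Set.eq_empty_iff_forall_notMem.mp hemp (i, j) hTij
  have hzero : ∀ T ∈ S, ∀ i j, ¬(i ≤ 2*t+1 ∧ j ≤ 2*m) → T i j = 0 := by
    intro T hT i j h
    by_contra h0
    have := (hT.support i j).mp (by omega)
    rw [inSkew_iff m t hm] at this
    omega
  have : Finite ↥S := by
    apply Finite.of_injective
      (fun T : ↥S => fun p : Fin (2*t+2) × Fin (2*m+1) =>
        (⟨T.val p.1.val p.2.val, by
          have := hbound T.val T.property p.1.val p.2.val; omega⟩ : Fin (t+2)))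
    rintro ⟨T, hT⟩ ⟨T', hT'⟩ h
    apply Subtype.ext
    funext i j
    show T i j = T' i j
    by_cases hij : i ≤ 2*t+1 ∧ j ≤ 2*m
    · have := congrFun h (⟨i, by omega⟩, ⟨j, by omega⟩)
      simpa [Fin.ext_iff] using this
    · rw [hzero T hT i j hij, hzero T' hT' i j hij]
  exact Set.finite_coe_iff.mp this

/-- For the hook `λ = (1+a, 1^b)` with `a` even positive and `b` odd, with
`α = (1 + a/2, 1^{(b−1)/2})` and `β = (a/2, 1^{(b+1)/2})`, one has
`c^λ_{βα} ≥ 1` (tableaux of shape `λ/β` and content `α`). -/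
theorem one_le_lrCoeff_hook_even_arm_beta_alpha (a b : ℕ)
    (ha : Even a) (ha' : 0 < a) (hb : Odd b) :
    1 ≤ lrCoeff (hook a b) (a / 2 :: List.replicate ((b + 1) / 2) 1)
        (hook (a / 2) ((b - 1) / 2)) := by
  obtain ⟨m, rfl⟩ := ha
  obtain ⟨t, rfl⟩ := hb
  have hm : 0 < m := by omega
  have h1 : (m + m) / 2 = m := by omega
  have h2 : (2 * t + 1 + 1) / 2 = t + 1 := by omega
  have h3 : (2 * t + 1 - 1) / 2 = t := by omega
  rw [h1, h2, h3]
  have hhook : hook (m + m) (2*t+1) = (1+2*m) :: List.replicate (2*t+1) 1 := by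
    unfold hook
    congr 1
    omega
  have hhook2 : hook m t = (1+m) :: List.replicate t 1 := rfl
  rw [hhook, hhook2]
  unfold lrCoeff
  have := (Set.ncard_pos (LRset_finite m t hm)).mpr ⟨T0 m t, T0_isLR m t hm⟩
  omega
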